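/- Let S be a nonempty bounded subset of ℝ^D, let U > 0 and 0 < a < b, and let φ : ℝ^D → ℝ^K and θ : ℝ^K → ℝ^D. Suppose there are patterns P_1, …, P_M ⊆ {0,…,K−1} with positive perturbation bounds α_{m,k} > 0 (k ∈ P_m) such that: (i) for every x ∈ S, ‖x − θ(φ(x))‖₂ ≤ U/2 and φ(x) is preserved by some pattern P_m; and (ii) for each m, the decoder θ is (U/2)-robust with respect to P_m with bounds (α_{m,k}). For each m and k ∈ P_m let Q_{m,k} be the least positive integer strictly greater than (b − a)/(2α_{m,k}). Then Σ_{m=1}^{M} ∏_{k∈P_m} Q_{m,k} ≥ E_{S,U}, where an empty product equals 1. (Combined form of Theorem 1: the total size of the quantization grids of the observed spiking patterns is at least the U-essence of the data.) -/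

import Mathlib

attribute [local instance] Classical.propDecidable

/-- A finite set `F ⊆ ℝ^D` is a valid `U`-quantization strategy for `S ⊆ ℝ^D` if
every `x ∈ S` is within Euclidean distance `U` of some `f ∈ F`. -/
def ValidQuant {D : ℕ} (U : ℝ) (S : Set (EuclideanSpace ℝ (Fin D)))
    (F : Finset (EuclideanSpace ℝ (Fin D))) : Prop :=
  ∀ x ∈ S, ∃ f ∈ F, ‖x - f‖ ≤ U

/-- The `U`-essence of `S`: the minimal cardinality of a valid `U`-quantization
strategy for `S`. -/
noncomputable def essence {D : ℕ} (S : Set (EuclideanSpace ℝ (Fin D))) (U : ℝ) : ℕ :=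
  sInf {n : ℕ | ∃ F : Finset (EuclideanSpace ℝ (Fin D)), ValidQuant U S F ∧ F.card = n}

/-- A spectrum `z ∈ ℝ^K` is preserved by a pattern `P ⊆ {0,…,K-1}` if `z k ∈ [a,b]`
for every `k ∈ P` and `z k = 0` for every `k ∉ P`. -/
def Preserved {K : ℕ} (a b : ℝ) (P : Finset (Fin K))
    (z : EuclideanSpace ℝ (Fin K)) : Prop :=
  (∀ k ∈ P, z k ∈ Set.Icc a b) ∧ ∀ k ∉ P, z k = 0

/-- A decoder `θ` is `U`-robust w.r.t. pattern `P` with perturbation bounds `α` if the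
reconstructions of any two spectra preserved by `P` that differ by at most `α k` on
each `k ∈ P` are within `U` of each other. -/
def URobust {K D : ℕ} (a b U : ℝ) (P : Finset (Fin K)) (α : Fin K → ℝ)
    (θ : EuclideanSpace ℝ (Fin K) → EuclideanSpace ℝ (Fin D)) : Prop :=
  ∀ z z' : EuclideanSpace ℝ (Fin K), Preserved a b P z → Preserved a b P z' →
    (∀ k ∈ P, |z k - z' k| ≤ α k) → ‖θ z - θ z'‖ ≤ U

/-- Combined form of Theorem 1: if every sample of `S` is reconstructed within `U/2`
through a spectrum preserved by one of the observed spiking patterns `P m`, and the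
decoder is `(U/2)`-robust w.r.t. each pattern, then the total size
`Σ_m ∏_{k ∈ P m} Q_{m,k}` of the quantization grids (with
`Q_{m,k} = ⌊(b-a)/(2α_{m,k})⌋ + 1`) is at least the `U`-essence of `S`. -/
lemma grid_close {a b α t : ℝ} (hα : 0 < α) (hta : a ≤ t) (htb : t ≤ b) :
    |t - min b (a + α + 2*α*(Nat.floor ((t-a)/(2*α)) : ℝ))| ≤ α := by
  set j : ℕ := Nat.floor ((t-a)/(2*α)) with hj
  have h2α : 0 < 2*α := by linarith
  have hr0 : 0 ≤ (t-a)/(2*α) := div_nonneg (by linarith) h2α.le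
  have hlo : (j : ℝ) ≤ (t-a)/(2*α) := Nat.floor_le hr0
  have hhi : (t-a)/(2*α) < j + 1 := Nat.lt_floor_add_one _
  have hlo' : 2*α*(j:ℝ) ≤ t - a := by
    have := mul_le_mul_of_nonneg_left hlo h2α.le
    rwa [mul_div_cancel₀ _ h2α.ne'] at this
  have hhi' : t - a < 2*α*((j:ℝ)+1) := by
    have := mul_lt_mul_of_pos_left hhi h2α
    rwa [mul_div_cancel₀ _ h2α.ne'] at this
  rcases le_or_gt (a + α + 2*α*(j:ℝ)) b with hc | hc
  · rw [min_eq_right hc, abs_le]; constructor <;> nlinarith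
  · rw [min_eq_left hc.le, abs_le]; constructor <;> nlinarith

theorem total_grid_size_ge_essence {D K M : ℕ}
    (S : Set (EuclideanSpace ℝ (Fin D))) (hS : S.Nonempty)
    (hSb : Bornology.IsBounded S)
    (U a b : ℝ) (hU : 0 < U) (ha : 0 < a) (hab : a < b)
    (φ : EuclideanSpace ℝ (Fin D) → EuclideanSpace ℝ (Fin K))
    (θ : EuclideanSpace ℝ (Fin K) → EuclideanSpace ℝ (Fin D))
    (P : Fin M → Finset (Fin K)) (α : Fin M → Fin K → ℝ)
    (hα : ∀ m : Fin M, ∀ k ∈ P m, 0 < α m k)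
    (h1 : ∀ x ∈ S, ‖x - θ (φ x)‖ ≤ U / 2 ∧ ∃ m : Fin M, Preserved a b (P m) (φ x))
    (h2 : ∀ m : Fin M, URobust a b (U / 2) (P m) (α m) θ)
    (Q : Fin M → Fin K → ℕ)
    (hQ : ∀ m : Fin M, ∀ k ∈ P m, Q m k = Nat.floor ((b - a) / (2 * α m k)) + 1) :
    essence S U ≤ ∑ m : Fin M, ∏ k ∈ P m, Q m k := by
  classical
  -- the grid spectrum associated to a choice g of indices
  set spec : ∀ m : Fin M, (∀ k ∈ P m, ℕ) → EuclideanSpace ℝ (Fin K) :=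
    fun m g => WithLp.toLp 2 (fun k => if h : k ∈ P m
      then min b (a + α m k + 2 * α m k * (g k h : ℝ)) else 0) with hspec
  set F : Finset (EuclideanSpace ℝ (Fin D)) :=
    Finset.univ.biUnion (fun m : Fin M =>
      (((P m).pi (fun k => Finset.range (Q m k))).image (fun g => θ (spec m g)))) with hF
  have hvalid : ValidQuant U S F := by
    intro x hx
    obtain ⟨hrec, m, hpres⟩ := h1 x hx
    -- define the grid choice
    set g : ∀ k ∈ P m, ℕ := fun k _ => Nat.floor ((φ x k - a) / (2 * α m k)) with hg
    have hgmem : g ∈ (P m).pi (fun k => Finset.range (Q m k)) := by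
      rw [Finset.mem_pi]
      intro k hk
      rw [Finset.mem_range, hQ m k hk, Nat.lt_succ_iff]
      apply Nat.floor_le_floor
      have hαk := hα m k hk
      apply div_le_div_of_nonneg_right ?_ (by linarith)
      have := (hpres.1 k hk).2
      linarith
    have hpres' : Preserved a b (P m) (spec m g) := by
      constructor
      · intro k hk
        simp only [hspec, PiLp.toLp_apply, hk, dif_pos]
        have hαk := hα m k hk
        constructor
        · have hg0 : (0:ℝ) ≤ (g k hk : ℝ) := Nat.cast_nonneg _
          exact le_min hab.le (by nlinarith)
        · exact min_le_left _ _
      · intro k hk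
        simp only [hspec, PiLp.toLp_apply, hk, dif_neg, not_false_iff]
    have hclose : ∀ k ∈ P m, |φ x k - spec m g k| ≤ α m k := by
      intro k hk
      simp only [hspec, PiLp.toLp_apply, hk, dif_pos]
      exact grid_close (hα m k hk) (hpres.1 k hk).1 (hpres.1 k hk).2
    have hrob := h2 m (φ x) (spec m g) hpres hpres' hclose
    refine ⟨θ (spec m g), ?_, ?_⟩
    · rw [hF, Finset.mem_biUnion]
      exact ⟨m, Finset.mem_univ m, Finset.mem_image.mpr ⟨g, hgmem, rfl⟩⟩
    · calc ‖x - θ (spec m g)‖ ≤ ‖x - θ (φ x)‖ + ‖θ (φ x) - θ (spec m g)‖ :=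
            norm_sub_le_norm_sub_add_norm_sub _ _ _
        _ ≤ U / 2 + U / 2 := add_le_add hrec hrob
        _ = U := by ring
  have hmem : F.card ∈ {n : ℕ | ∃ F' : Finset (EuclideanSpace ℝ (Fin D)),
      ValidQuant U S F' ∧ F'.card = n} := ⟨F, hvalid, rfl⟩
  refine le_trans (Nat.sInf_le hmem) ?_
  calc F.card ≤ ∑ m : Fin M,
        ((((P m).pi (fun k => Finset.range (Q m k))).image (fun g => θ (spec m g)))).card :=
        Finset.card_biUnion_le
    _ ≤ ∑ m : Fin M, ∏ k ∈ P m, Q m k := by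
        apply Finset.sum_le_sum
        intro m _
        refine le_trans Finset.card_image_le ?_
        rw [Finset.card_pi]
        exact le_of_eq (Finset.prod_congr rfl (fun k _ => Finset.card_range _))
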